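/- Let G be a graph with an RDV representation, let v maximize y(t(v)), and restrict each neighbour path P(w) to its portion at depth at most y(t(v)). If the neighbours of v are sorted as w_1,...,w_k by decreasing depth y(t(w_i)) of their top endpoints, then the restricted paths satisfy P'(w_1) ⊆ P'(w_2) ⊆ ... ⊆ P'(w_k). -/

import Mathlib

namespace Paper

/-- Has vertex `v` already been matched by the edge list `M`? -/
def matchedB {n : ℕ} (M : List (Fin n × Fin n)) (v : Fin n) : Bool :=
  M.any fun e => e.1 = v || e.2 = v

/-- One step of the greedy matching algorithm: process vertex `i`; if it is unmatched
and has an unmatched neighbour, match it to the unmatched neighbour of smallest index. -/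
def greedyStep {n : ℕ} (G : SimpleGraph (Fin n)) [DecidableRel G.Adj]
    (M : List (Fin n × Fin n)) (i : Fin n) : List (Fin n × Fin n) :=
  if matchedB M i then M
  else
    if h : (Finset.univ.filter fun j => G.Adj i j ∧ matchedB M j = false).Nonempty then
      (i, (Finset.univ.filter fun j => G.Adj i j ∧ matchedB M j = false).min' h) :: M
    else M

/-- The greedy matching algorithm, processing the vertices `v_1, …, v_n` in order. -/
def greedy {n : ℕ} (G : SimpleGraph (Fin n)) [DecidableRel G.Adj] : List (Fin n × Fin n) :=
  (List.finRange n).foldl (greedyStep G) []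

/-- The partial matching produced by the greedy algorithm after processing the
first `k` vertices. -/
def greedyPrefix {n : ℕ} (G : SimpleGraph (Fin n)) [DecidableRel G.Adj] (k : ℕ) :
    List (Fin n × Fin n) :=
  ((List.finRange n).take k).foldl (greedyStep G) []

/-- One step of the delayed greedy algorithm: state is (matching, free set `F`);
when processing `j`, if `j` has a neighbour in `F`, match `j` to the smallest-index
such neighbour and remove it from `F`; otherwise add `j` to `F`. -/
def delayedStep {n : ℕ} (G : SimpleGraph (Fin n)) [DecidableRel G.Adj]
    (s : List (Fin n × Fin n) × Finset (Fin n)) (j : Fin n) :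
    List (Fin n × Fin n) × Finset (Fin n) :=
  if h : (s.2.filter fun i => G.Adj i j).Nonempty then
    (((s.2.filter fun i => G.Adj i j).min' h, j) :: s.1,
      s.2.erase ((s.2.filter fun i => G.Adj i j).min' h))
  else (s.1, insert j s.2)

/-- The delayed greedy matching algorithm. -/
def delayedGreedy {n : ℕ} (G : SimpleGraph (Fin n)) [DecidableRel G.Adj] :
    List (Fin n × Fin n) :=
  ((List.finRange n).foldl (delayedStep G) ([], ∅)).1

/-- `M` is a matching of `G`: its members are edges of `G` and are pairwise
vertex-disjoint. -/
def IsMatchingL {n : ℕ} (G : SimpleGraph (Fin n)) (M : List (Fin n × Fin n)) : Prop :=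
  (∀ e ∈ M, G.Adj e.1 e.2) ∧
    ∀ e ∈ M, ∀ f ∈ M, e ≠ f → e.1 ≠ f.1 ∧ e.1 ≠ f.2 ∧ e.2 ≠ f.1 ∧ e.2 ≠ f.2

/-- A finite rooted tree on node set `Fin N`, given by a parent function and a
depth function (distance to the root). -/
structure RootedTree (N : ℕ) where
  parent : Fin N → Fin N
  root : Fin N
  depth : Fin N → ℕ
  depth_root : depth root = 0
  parent_root : parent root = root
  depth_parent : ∀ i, i ≠ root → depth (parent i) + 1 = depth i

/-- `T.Anc u w` : node `u` is an ancestor (possibly equal) of node `w`. -/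
def RootedTree.Anc {N : ℕ} (T : RootedTree N) (u w : Fin N) : Prop :=
  ∃ k : ℕ, T.parent^[k] w = u

/-- A node is a leaf if it has no children. -/
def RootedTree.IsLeaf {N : ℕ} (T : RootedTree N) (u : Fin N) : Prop :=
  ∀ w, T.parent w = u → w = u

/-- The data of an RDV representation: a rooted host tree `T` and, for each vertex `v`,
a downward path `P(v)` going from its top node `t v` down to its bottom node `b v`. -/
structure RDVData (N n : ℕ) where
  T : RootedTree N
  t : Fin n → Fin N
  b : Fin n → Fin N
  downward : ∀ v, T.Anc (t v) (b v)

/-- The node `u` lies on the downward path `P(v)`. -/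
def RDVData.onPath {N n : ℕ} (R : RDVData N n) (v : Fin n) (u : Fin N) : Prop :=
  R.T.Anc (R.t v) u ∧ R.T.Anc u (R.b v)

/-- `R` is an RDV representation of `G`: distinct vertices are adjacent iff their
downward paths share a node. -/
def RDVData.IsRep {N n : ℕ} (R : RDVData N n) (G : SimpleGraph (Fin n)) : Prop :=
  ∀ u w : Fin n, u ≠ w → (G.Adj u w ↔ ∃ node, R.onPath u node ∧ R.onPath w node)

/-- The identity enumeration `v_1, …, v_n` (i.e. the order on `Fin n`) is a bottom-up
enumeration: vertices are sorted by decreasing depth of the top node `t v`. -/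
def RDVData.BottomUp {N n : ℕ} (R : RDVData N n) : Prop :=
  ∀ i j : Fin n, i ≤ j → R.T.depth (R.t j) ≤ R.T.depth (R.t i)

/-- A planar (left-to-right) coordinate structure on a rooted tree: an injective
index on the leaves so that the leaf descendants of every node occupy a contiguous
range of indices, together with the leftmost leaf descendant `lmost` and rightmost
leaf descendant `rmost` of every node. -/
structure PlanarCoords {N : ℕ} (T : RootedTree N) where
  idx : Fin N → ℕ
  lmost : Fin N → Fin N
  rmost : Fin N → Fin N
  idx_inj : ∀ u w, T.IsLeaf u → T.IsLeaf w → idx u = idx w → u = w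
  lmost_leaf : ∀ u, T.IsLeaf (lmost u)
  lmost_desc : ∀ u, T.Anc u (lmost u)
  lmost_min : ∀ u lf, T.IsLeaf lf → T.Anc u lf → idx (lmost u) ≤ idx lf
  rmost_leaf : ∀ u, T.IsLeaf (rmost u)
  rmost_desc : ∀ u, T.Anc u (rmost u)
  rmost_max : ∀ u lf, T.IsLeaf lf → T.Anc u lf → idx lf ≤ idx (rmost u)
  contiguous : ∀ u lf lf' lf'', T.IsLeaf lf → T.IsLeaf lf' → T.IsLeaf lf'' →
    T.Anc u lf → T.Anc u lf' → idx lf ≤ idx lf'' → idx lf'' ≤ idx lf' → T.Anc u lf''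

/-- The x-coordinate of a node: the index of its leftmost leaf descendant. -/
def PlanarCoords.x {N : ℕ} {T : RootedTree N} (P : PlanarCoords T) (u : Fin N) : ℕ :=
  P.idx (P.lmost u)

/-- The closed neighbourhood `N[v]`. -/
def closedNbr {n : ℕ} (G : SimpleGraph (Fin n)) (v : Fin n) : Set (Fin n) :=
  insert v {w | G.Adj v w}

/-- `v` is a simple vertex: `N[v]` is a clique that can be ordered
`w_1, …, w_k` with `N[w_1] ⊆ N[w_2] ⊆ … ⊆ N[w_k]`. -/
def IsSimpleVx {n : ℕ} (G : SimpleGraph (Fin n)) (v : Fin n) : Prop :=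
  G.IsClique (closedNbr G v) ∧
    ∃ l : List (Fin n), (∀ w, w ∈ l ↔ w ∈ closedNbr G v) ∧
      l.Chain' fun a b => closedNbr G a ⊆ closedNbr G b

/-- The subgraph of `G` induced by the tail vertices `{v_i, …, v_n}`. -/
def tailGraph {n : ℕ} (G : SimpleGraph (Fin n)) (i : Fin n) : SimpleGraph (Fin n) where
  Adj a b := G.Adj a b ∧ i ≤ a ∧ i ≤ b
  symm := ⟨fun a b h => ⟨h.1.symm, h.2.2, h.2.1⟩⟩
  loopless := ⟨fun a h => G.loopless.irrefl a h.1⟩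

/-- `G` is chordal: every cycle of length at least 4 has a chord, i.e. an edge
between two (necessarily non-consecutive) vertices of the cycle that is not an
edge of the cycle. -/
def Chordal {V : Type*} (G : SimpleGraph V) : Prop :=
  ∀ (v : V) (c : G.Walk v v), c.IsCycle → 4 ≤ c.length →
    ∃ u w, u ∈ c.support ∧ w ∈ c.support ∧ G.Adj u w ∧ s(u, w) ∉ c.edges

/-- `S` is (the node set of) a subtree of the rooted tree `T`. -/
def IsSubtree {N : ℕ} (T : RootedTree N) (S : Set (Fin N)) : Prop :=
  S.Nonempty ∧ ∃ top ∈ S, (∀ u ∈ S, T.Anc top u) ∧ ∀ u ∈ S, u ≠ top → T.parent u ∈ S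

lemma anc_refl' {N : ℕ} (T : RootedTree N) (u : Fin N) : T.Anc u u := ⟨0, rfl⟩

lemma anc_trans' {N : ℕ} (T : RootedTree N) {a b c : Fin N}
    (h1 : T.Anc a b) (h2 : T.Anc b c) : T.Anc a c := by
  obtain ⟨k, hk⟩ := h1; obtain ⟨j, hj⟩ := h2
  exact ⟨k + j, by rw [Function.iterate_add_apply, hj, hk]⟩

lemma depth_parent_le' {N : ℕ} (T : RootedTree N) (i : Fin N) :
    T.depth (T.parent i) ≤ T.depth i := by
  by_cases h : i = T.root
  · rw [h, T.parent_root]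
  · have := T.depth_parent i h; omega

lemma depth_iter_le' {N : ℕ} (T : RootedTree N) (k : ℕ) (w : Fin N) :
    T.depth (T.parent^[k] w) ≤ T.depth w := by
  induction k with
  | zero => simp
  | succ k ih =>
    rw [Function.iterate_succ_apply']
    exact le_trans (depth_parent_le' T _) ih

lemma anc_depth_le' {N : ℕ} (T : RootedTree N) {u w : Fin N} (h : T.Anc u w) :
    T.depth u ≤ T.depth w := by
  obtain ⟨k, hk⟩ := h; rw [← hk]; exact depth_iter_le' T k w

lemma iter_fix' {N : ℕ} (T : RootedTree N) (k : ℕ) (w : Fin N)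
    (h : T.depth w ≤ T.depth (T.parent^[k] w)) : T.parent^[k] w = w := by
  induction k with
  | zero => rfl
  | succ k ih =>
    rw [Function.iterate_succ_apply'] at h ⊢
    by_cases hr : T.parent^[k] w = T.root
    · have hw : T.parent^[k] w = w := by
        apply ih
        have h2 := depth_parent_le' T (T.parent^[k] w)
        omega
      rw [hw] at hr
      rw [hw, hr, T.parent_root]
    · have h1 := T.depth_parent _ hr
      have h2 := depth_iter_le' T k w
      omega

lemma anc_antisym' {N : ℕ} (T : RootedTree N) {u w : Fin N} (h : T.Anc u w)
    (hd : T.depth w ≤ T.depth u) : u = w := by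
  obtain ⟨k, hk⟩ := h
  rw [← hk] at hd
  rw [← hk, iter_fix' T k w hd]

lemma anc_total' {N : ℕ} (T : RootedTree N) {u u' w : Fin N}
    (h : T.Anc u w) (h' : T.Anc u' w) : T.Anc u u' ∨ T.Anc u' u := by
  obtain ⟨k, hk⟩ := h; obtain ⟨j, hj⟩ := h'
  rcases le_total k j with hle | hle
  · right
    refine ⟨j - k, ?_⟩
    rw [← hk, ← Function.iterate_add_apply, Nat.sub_add_cancel hle, hj]
  · left
    refine ⟨k - j, ?_⟩
    rw [← hj, ← Function.iterate_add_apply, Nat.sub_add_cancel hle, hk]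

/-- If `u` and `u'` are both ancestors of `w` and `u'` is at most as deep as `u`,
then `u'` is an ancestor of `u`. -/
lemma anc_of_both' {N : ℕ} (T : RootedTree N) {u u' w : Fin N}
    (h : T.Anc u w) (h' : T.Anc u' w) (hd : T.depth u' ≤ T.depth u) : T.Anc u' u := by
  rcases anc_total' T h h' with hc | hc
  · have := anc_antisym' T hc hd
    rw [this]; exact anc_refl' T _
  · exact hc

/-- If `v` maximizes `y(t(v))` and the neighbours of `v` are sorted by
decreasing depth of their top endpoints, then the paths restricted to depth at most
`y(t(v))` form an increasing chain under inclusion. -/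
theorem stmt8 {N n : ℕ} (G : SimpleGraph (Fin n)) (R : RDVData N n)
    (hrep : R.IsRep G) (v : Fin n)
    (hmax : ∀ w, R.T.depth (R.t w) ≤ R.T.depth (R.t v)) :
    ∀ l : List (Fin n), (∀ w, w ∈ l ↔ G.Adj v w) →
      l.Pairwise (fun a b => R.T.depth (R.t b) ≤ R.T.depth (R.t a)) →
      l.Chain' (fun a b =>
        {u | R.onPath a u ∧ R.T.depth u ≤ R.T.depth (R.t v)} ⊆
          {u | R.onPath b u ∧ R.T.depth u ≤ R.T.depth (R.t v)}) := by
  intro l hl hpw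
  -- For any neighbour w of v, the top node t v lies on P(w).
  have key : ∀ w, G.Adj v w →
      R.T.Anc (R.t w) (R.t v) ∧ R.T.Anc (R.t v) (R.b w) := by
    intro w hadj
    obtain ⟨s, hsv, hsw⟩ := (hrep v w hadj.ne).mp hadj
    have htop : R.T.Anc (R.t w) (R.t v) :=
      anc_of_both' R.T hsv.1 hsw.1 (hmax w)
    exact ⟨htop, anc_trans' R.T hsv.1 hsw.2⟩
  refine List.Pairwise.isChain ?_
  have himp : ∀ a ∈ l, ∀ b ∈ l, R.T.depth (R.t b) ≤ R.T.depth (R.t a) →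
      {u | R.onPath a u ∧ R.T.depth u ≤ R.T.depth (R.t v)} ⊆
        {u | R.onPath b u ∧ R.T.depth u ≤ R.T.depth (R.t v)} := by
    intro a ha b hb hd
    obtain ⟨hta, hba⟩ := key a ((hl a).mp ha)
    obtain ⟨htb, hbb⟩ := key b ((hl b).mp hb)
    have htab : R.T.Anc (R.t b) (R.t a) := anc_of_both' R.T hta htb hd
    intro u hu
    obtain ⟨⟨h1, h2⟩, h3⟩ := hu
    -- u and t v are both ancestors of b a (the bottom of P(a)); compare them.
    have hutv : R.T.Anc u (R.t v) := by
      have hvba : R.T.Anc (R.t v) (R.b a) := hba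
      exact anc_of_both' R.T hvba h2 h3
    exact ⟨⟨anc_trans' R.T htab h1, anc_trans' R.T hutv hbb⟩, h3⟩
  exact List.Pairwise.imp_of_mem (fun {a b} ha hb h => himp a ha b hb h) hpw
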